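/- Let a,b,c,d,e,f,h,i,j,p be complex numbers and let g be a function on quadruples (w,x,y,z) of nonnegative integers with w+x+y+z = n (n ≥ 4) satisfying the six domain-4 Fibonacci recurrences: g_{w-2,x+2,y,z} = g_{w,x,y,z} + a g_{w-1,x+1,y,z} + b g_{w-1,x,y+1,z} + c g_{w-1,x,y,z+1}; g_{w-2,x,y+2,z} = g_{w,x,y,z} + d g_{w-1,x+1,y,z} + e g_{w-1,x,y+1,z} + f g_{w-1,x,y,z+1}; g_{w-2,x,y,z+2} = g_{w,x,y,z} + h g_{w-1,x+1,y,z} + i g_{w-1,x,y+1,z} + j g_{w-1,x,y,z+1}; g_{w-2,x+1,y+1,z} = b g_{w-1,x+1,y,z} + d g_{w-1,x,y+1,z} + p g_{w-1,x,y,z+1}; g_{w-2,x+1,y,z+1} = c g_{w-1,x+1,y,z} + p g_{w-1,x,y+1,z} + h g_{w-1,x,y,z+1}; g_{w-2,x,y+1,z+1} = p g_{w-1,x+1,y,z} + f g_{w-1,x,y+1,z} + i g_{w-1,x,y,z+1}. Define h' on quadruples summing to n-2 by h'_{w,x,y,z} = g_{w+2,x,y,z} + g_{w,x+2,y,z} +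 g_{w,x,y+2,z} + g_{w,x,y,z+2}. Then h' satisfies the same six recurrences with the same ten parameters. -/
import Mathlib


theorem stmt_11 (a b c d e f h i j p : ℂ)
    (n : ℕ) (hn : 4 ≤ n) (g : ℕ → ℕ → ℕ → ℕ → ℂ)
    (hg : ∀ w x y z : ℕ, w + x + y + z + 2 = n →
      (g w (x+2) y z = g (w+2) x y z + a * g (w+1) (x+1) y z + b * g (w+1) x (y+1) z + c * g (w+1) x y (z+1)) ∧
      (g w x (y+2) z = g (w+2) x y z + d * g (w+1) (x+1) y z + e * g (w+1) x (y+1) z + f * g (w+1) x y (z+1)) ∧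
      (g w x y (z+2) = g (w+2) x y z + h * g (w+1) (x+1) y z + i * g (w+1) x (y+1) z + j * g (w+1) x y (z+1)) ∧
      (g w (x+1) (y+1) z = b * g (w+1) (x+1) y z + d * g (w+1) x (y+1) z + p * g (w+1) x y (z+1)) ∧
      (g w (x+1) y (z+1) = c * g (w+1) (x+1) y z + p * g (w+1) x (y+1) z + h * g (w+1) x y (z+1)) ∧
      (g w x (y+1) (z+1) = p * g (w+1) (x+1) y z + f * g (w+1) x (y+1) z + i * g (w+1) x y (z+1)))
    (h' : ℕ → ℕ → ℕ → ℕ → ℂ)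
    (hh : ∀ w x y z : ℕ, h' w x y z = g (w+2) x y z + g w (x+2) y z + g w x (y+2) z + g w x y (z+2)) :
    ∀ w x y z : ℕ, w + x + y + z + 2 = n - 2 →
      (h' w (x+2) y z = h' (w+2) x y z + a * h' (w+1) (x+1) y z + b * h' (w+1) x (y+1) z + c * h' (w+1) x y (z+1)) ∧
      (h' w x (y+2) z = h' (w+2) x y z + d * h' (w+1) (x+1) y z + e * h' (w+1) x (y+1) z + f * h' (w+1) x y (z+1)) ∧
      (h' w x y (z+2) = h' (w+2) x y z + h * h' (w+1) (x+1) y z + i * h' (w+1) x (y+1) z + j * h' (w+1) x y (z+1)) ∧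
      (h' w (x+1) (y+1) z = b * h' (w+1) (x+1) y z + d * h' (w+1) x (y+1) z + p * h' (w+1) x y (z+1)) ∧
      (h' w (x+1) y (z+1) = c * h' (w+1) (x+1) y z + p * h' (w+1) x (y+1) z + h * h' (w+1) x y (z+1)) ∧
      (h' w x (y+1) (z+1) = p * h' (w+1) (x+1) y z + f * h' (w+1) x (y+1) z + i * h' (w+1) x y (z+1)) := by
  intro w x y z hsum
  have e1 := hg (w+2) x y z (by omega)
  have e2 := hg w (x+2) y z (by omega)
  have e3 := hg w x (y+2) z (by omega)
  have e4 := hg w x y (z+2) (by omega)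
  simp only [hh]
  refine ⟨?_, ?_, ?_, ?_, ?_, ?_⟩
  · linear_combination e1.1 + e2.1 + e3.1 + e4.1
  · linear_combination e1.2.1 + e2.2.1 + e3.2.1 + e4.2.1
  · linear_combination e1.2.2.1 + e2.2.2.1 + e3.2.2.1 + e4.2.2.1
  · linear_combination e1.2.2.2.1 + e2.2.2.2.1 + e3.2.2.2.1 + e4.2.2.2.1
  · linear_combination e1.2.2.2.2.1 + e2.2.2.2.2.1 + e3.2.2.2.2.1 + e4.2.2.2.2.1
  · linear_combination e1.2.2.2.2.2 + e2.2.2.2.2.2 + e3.2.2.2.2.2 + e4.2.2.2.2.2
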